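/- Let a : ℕ → ℚ be the cubical Gromov coefficients: a(0)=1, a(1)=-1, a(2)=A, and 2·a(n) = -(∑_{k=0}^{n-2} a(k)·C(n-1,k)·2^{n-1-k} + ∑_{k=0}^{n-1} a(k)·C(n,k)·2^{n-k}) for n ≥ 3. Define c(j,d) = ∑_{k=j}^{d} 2^{-k}·C(d-j,d-k)·a(k). Then for all d ≥ 2 and 0 ≤ j ≤ d, c(j,d) = (-1)^d · c(d-j,d). -/

import Mathlib

open Finset

noncomputable def gg (b : ℕ → ℚ) (m d : ℕ) : ℚ :=
  ∑ i ∈ Finset.range (m + 1), (m.choose i : ℚ) * b (d - i)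

noncomputable def SS (b : ℕ → ℚ) (n : ℕ) : ℚ :=
  ∑ k ∈ Finset.range (n + 1), (n.choose k : ℚ) * b k

lemma gg_zero (b : ℕ → ℚ) (d : ℕ) : gg b 0 d = b d := by simp [gg]

lemma gg_self (b : ℕ → ℚ) (d : ℕ) : gg b d d = SS b d := by
  unfold gg SS
  rw [← Finset.sum_range_reflect (fun i => (d.choose i : ℚ) * b (d - i)) (d + 1)]
  apply Finset.sum_congr rfl
  intro i hi
  have hi' : i ≤ d := by simpa using Nat.lt_succ_iff.mp (Finset.mem_range.mp hi)
  simp only [Nat.add_sub_cancel]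
  rw [Nat.choose_symm hi', Nat.sub_sub_self hi']

lemma gg_pascal (b : ℕ → ℚ) (m d : ℕ) : gg b (m + 1) d = gg b m d + gg b m (d - 1) := by
  have key : ∑ i ∈ Finset.range (m + 2), (m.choose i : ℚ) * b (d - i)
      = ∑ i ∈ Finset.range (m + 1), (m.choose i : ℚ) * b (d - i) := by
    rw [Finset.sum_range_succ, Nat.choose_succ_self]
    simp
  unfold gg
  rw [Finset.sum_range_succ' (fun i => (((m + 1).choose i : ℕ) : ℚ) * b (d - i)) (m + 1)]
  rw [Finset.sum_range_succ' (fun i => ((m.choose i : ℕ) : ℚ) * b (d - i)) (m + 1)] at key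
  have step : ∀ i ∈ Finset.range (m + 1),
      (((m + 1).choose (i + 1) : ℕ) : ℚ) * b (d - (i + 1))
        = (m.choose (i + 1) : ℚ) * b (d - (i + 1)) + (m.choose i : ℚ) * b (d - 1 - i) := by
    intro i _
    have hsub : d - (i + 1) = d - 1 - i := by omega
    rw [Nat.choose_succ_succ, hsub]
    push_cast
    ring
  rw [Finset.sum_congr rfl step, Finset.sum_add_distrib]
  simp only [Nat.choose_zero_right, Nat.cast_one, one_mul, Nat.sub_zero] at key ⊢
  linarith [key]

lemma alt_choose_q (m : ℕ) :
    ∑ i ∈ Finset.range (m + 1), (-1 : ℚ) ^ i * (m.choose i : ℚ) = if m = 0 then 1 else 0 := by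
  have h := Int.alternating_sum_range_choose (n := m)
  have h2 := congrArg (fun z : ℤ => (z : ℚ)) h
  push_cast at h2
  rcases eq_or_ne m 0 with hm | hm
  · subst hm; simp
  · rw [if_neg hm] at h2 ⊢; exact h2

lemma alt_choose_q' (m : ℕ) :
    ∑ i ∈ Finset.range (m + 1), (-1 : ℚ) ^ (m - i) * (m.choose i : ℚ) = if m = 0 then 1 else 0 := by
  rw [← alt_choose_q m]
  rw [← Finset.sum_range_reflect (fun i => (-1 : ℚ) ^ i * (m.choose i : ℚ)) (m + 1)]
  apply Finset.sum_congr rfl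
  intro i hi
  have hi' : i ≤ m := by simpa using Nat.lt_succ_iff.mp (Finset.mem_range.mp hi)
  simp only [Nat.add_sub_cancel]
  rw [Nat.choose_symm hi']

lemma inner_delta (n j : ℕ) (hj : j ≤ n) :
    ∑ k ∈ Finset.range (n + 1), (-1 : ℚ) ^ (n - k) * (n.choose k : ℚ) * (k.choose j : ℚ)
      = if j = n then 1 else 0 := by
  have hzero : ∀ k ∈ Finset.range (n + 1), k ∉ Finset.Ico j (n + 1) →
      (-1 : ℚ) ^ (n - k) * (n.choose k : ℚ) * (k.choose j : ℚ) = 0 := by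
    intro k hk hk'
    have : k < j := by
      simp only [Finset.mem_range] at hk
      simp only [Finset.mem_Ico] at hk'
      omega
    rw [Nat.choose_eq_zero_of_lt this]
    simp
  rw [← Finset.sum_subset (Finset.Ico_subset_Ico (Nat.zero_le j) le_rfl |>.trans
      (by rw [Nat.Ico_zero_eq_range])) hzero]
  rw [Finset.sum_Ico_eq_sum_range]
  have hm : n + 1 - j = (n - j) + 1 := by omega
  rw [hm]
  have term : ∀ i ∈ Finset.range ((n - j) + 1),
      (-1 : ℚ) ^ (n - (j + i)) * (n.choose (j + i) : ℚ) * ((j + i).choose j : ℚ)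
        = (n.choose j : ℚ) * ((-1 : ℚ) ^ ((n - j) - i) * ((n - j).choose i : ℚ)) := by
    intro i hi
    have hi' : i ≤ n - j := by simpa using Nat.lt_succ_iff.mp (Finset.mem_range.mp hi)
    have h1 : j + i ≤ n := by omega
    have h2 : j ≤ j + i := by omega
    have h3 := Nat.choose_mul (n := n) h2
    rw [Nat.add_sub_cancel_left] at h3
    have h4 : (n.choose (j + i) : ℚ) * ((j + i).choose j : ℚ)
        = (n.choose j : ℚ) * ((n - j).choose i : ℚ) := by exact_mod_cast congrArg Nat.cast h3
    have h5 : n - (j + i) = (n - j) - i := by omega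
    rw [h5]
    linear_combination ((-1 : ℚ) ^ (n - j - i)) * h4
  rw [Finset.sum_congr rfl term, ← Finset.mul_sum, alt_choose_q' (n - j)]
  rcases eq_or_ne j n with h | h
  · subst h; simp
  · rw [if_neg h, if_neg (by omega)]
    ring

lemma inversion (b : ℕ → ℚ) (n : ℕ) :
    ∑ k ∈ Finset.range (n + 1), (-1 : ℚ) ^ (n - k) * (n.choose k : ℚ) * SS b k = b n := by
  have hS : ∀ k ∈ Finset.range (n + 1),
      (-1 : ℚ) ^ (n - k) * (n.choose k : ℚ) * SS b k
        = ∑ j ∈ Finset.range (n + 1),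
            (-1 : ℚ) ^ (n - k) * (n.choose k : ℚ) * ((k.choose j : ℚ) * b j) := by
    intro k hk
    have hk' : k ≤ n := by simpa using Nat.lt_succ_iff.mp (Finset.mem_range.mp hk)
    unfold SS
    rw [Finset.mul_sum]
    apply Finset.sum_subset (by intro x hx; simp at hx ⊢; omega)
    intro j hj hj'
    have : k < j := by simp at hj hj'; omega
    rw [Nat.choose_eq_zero_of_lt this]
    simp
  rw [Finset.sum_congr rfl hS, Finset.sum_comm]
  have : ∀ j ∈ Finset.range (n + 1),
      ∑ k ∈ Finset.range (n + 1),
          (-1 : ℚ) ^ (n - k) * (n.choose k : ℚ) * ((k.choose j : ℚ) * b j)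
        = (if j = n then 1 else 0) * b j := by
    intro j hj
    have hj' : j ≤ n := by simpa using Nat.lt_succ_iff.mp (Finset.mem_range.mp hj)
    rw [← inner_delta n j hj', Finset.sum_mul]
    apply Finset.sum_congr rfl
    intro k _
    ring
  rw [Finset.sum_congr rfl this]
  simp

lemma P_lemma (a : ℕ → ℚ)
    (h0 : a 0 = 1) (h1 : a 1 = -1)
    (hrec : ∀ n, 3 ≤ n →
      2 * a n = -((∑ k ∈ Finset.range (n - 1), a k * ((n - 1).choose k : ℚ) * 2 ^ (n - 1 - k)) +
        ∑ k ∈ Finset.range n, a k * (n.choose k : ℚ) * 2 ^ (n - k))) :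
    ∀ n, SS (fun k => a k / 2 ^ k) n = (-1) ^ n * (a n / 2 ^ n) := by
  set b : ℕ → ℚ := fun k => a k / 2 ^ k with hbdef
  intro n
  induction n using Nat.strong_induction_on with
  | _ n ih =>
    rcases Nat.even_or_odd n with he | ho
    · -- even case via inversion
      have hinv := inversion b n
      rw [Finset.sum_range_succ] at hinv
      have hrepl : ∀ k ∈ Finset.range n,
          (-1 : ℚ) ^ (n - k) * (n.choose k : ℚ) * SS b k = (n.choose k : ℚ) * b k := by
        intro k hk
        have hk' : k < n := Finset.mem_range.mp hk
        rw [ih k hk']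
        have hp : (-1 : ℚ) ^ (n - k) * (-1 : ℚ) ^ k = 1 := by
          rw [← pow_add, show n - k + k = n by omega]
          exact Even.neg_one_pow he
        linear_combination ((n.choose k : ℚ) * b k) * hp
      rw [Finset.sum_congr rfl hrepl] at hinv
      have hSS : ∑ k ∈ Finset.range n, (n.choose k : ℚ) * b k = SS b n - b n := by
        unfold SS
        rw [Finset.sum_range_succ, Nat.choose_self]
        push_cast; ring
      rw [hSS, Nat.sub_self, Nat.choose_self] at hinv
      rw [Even.neg_one_pow he]
      push_cast at hinv
      linarith
    · rcases eq_or_ne n 1 with h | h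
      · subst h
        simp [SS, Finset.sum_range_succ, hbdef, h0, h1]
        norm_num
      · have hn3 : 3 ≤ n := by
          rcases ho with ⟨t, ht⟩; omega
        have hpow : ∀ m k : ℕ, k ≤ m → (2 : ℚ) ^ m * ((m.choose k : ℚ) * b k)
            = a k * (m.choose k : ℚ) * 2 ^ (m - k) := by
          intro m k hk
          have h2 : (2 : ℚ) ^ m = 2 ^ (m - k) * 2 ^ k := by
            rw [← pow_add, show m - k + k = m by omega]
          have h2k : (2 : ℚ) ^ k ≠ 0 := pow_ne_zero _ two_ne_zero
          rw [h2, hbdef]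
          field_simp
        have hsum : ∀ m : ℕ, ∑ k ∈ Finset.range m, a k * (m.choose k : ℚ) * 2 ^ (m - k)
            = 2 ^ m * (SS b m - b m) := by
          intro m
          have hSS : SS b m - b m = ∑ k ∈ Finset.range m, (m.choose k : ℚ) * b k := by
            unfold SS
            rw [Finset.sum_range_succ, Nat.choose_self]
            push_cast; ring
          rw [hSS, Finset.mul_sum]
          apply Finset.sum_congr rfl
          intro k hk
          exact (hpow m k (le_of_lt (Finset.mem_range.mp hk))).symm
        have hprev : SS b (n - 1) = b (n - 1) := by
          have := ih (n - 1) (by omega)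
          have hev : Even (n - 1) := by
            rcases ho with ⟨t, ht⟩
            exact ⟨t, by omega⟩
          rwa [Even.neg_one_pow hev, one_mul] at this
        have hr := hrec n hn3
        rw [hsum (n - 1), hsum n, hprev] at hr
        have han : a n = b n * 2 ^ n := by
          rw [hbdef]
          field_simp
        rw [han] at hr
        have h2n : (2 : ℚ) ^ n ≠ 0 := pow_ne_zero _ two_ne_zero
        have h' : (2 : ℚ) ^ n * (2 * b n) = 2 ^ n * (-(SS b n - b n)) := by
          linear_combination hr
        have : 2 * b n = -(SS b n - b n) := mul_left_cancel₀ h2n h'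
        rw [Odd.neg_one_pow ho]
        linarith

lemma Q_lemma (b : ℕ → ℚ) (hP : ∀ n, SS b n = (-1) ^ n * b n) :
    ∀ d, ∀ m ≤ d, gg b m d = (-1) ^ d * gg b (d - m) d := by
  intro d
  induction d with
  | zero =>
    intro m hm
    interval_cases m
    simp
  | succ d ihd =>
    have hanchor : gg b (d + 1) (d + 1) = (-1 : ℚ) ^ (d + 1) * gg b 0 (d + 1) := by
      rw [gg_self, gg_zero]
      exact hP (d + 1)
    have aux : ∀ t, t ≤ d + 1 → gg b (d + 1 - t) (d + 1) = (-1) ^ (d + 1) * gg b t (d + 1) := by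
      intro t
      induction t with
      | zero => intro _; simpa using hanchor
      | succ t iht =>
        intro ht
        have ht' : t ≤ d := by omega
        have iht' := iht (by omega)
        have e1 : gg b (d + 1 - t) (d + 1) = gg b (d - t) (d + 1) + gg b (d - t) d := by
          rw [show d + 1 - t = (d - t) + 1 by omega, gg_pascal]
          norm_num
        have e2 : gg b (t + 1) (d + 1) = gg b t (d + 1) + gg b t d := by
          rw [gg_pascal]
          norm_num
        have e3 : gg b (d - t) d = (-1) ^ d * gg b t d := by
          have := ihd (d - t) (by omega)
          rwa [show d - (d - t) = t by omega] at this
        have hp : (-1 : ℚ) ^ (d + 1) = -(-1 : ℚ) ^ d := by rw [pow_succ]; ring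
        rw [show d + 1 - (t + 1) = d - t by omega]
        have e1' : gg b (d - t) (d + 1) = gg b (d + 1 - t) (d + 1) - gg b (d - t) d := by
          linarith [e1]
        rw [e1', iht', e3, e2, hp]
        ring
    intro m hm
    have := aux (d + 1 - m) (by omega)
    rwa [show d + 1 - (d + 1 - m) = m by omega] at this

theorem stmt_14 (A : ℚ) (a : ℕ → ℚ)
    (h0 : a 0 = 1) (h1 : a 1 = -1) (h2 : a 2 = A)
    (hrec : ∀ n, 3 ≤ n →
      2 * a n = -((∑ k ∈ Finset.range (n - 1), a k * ((n - 1).choose k : ℚ) * 2 ^ (n - 1 - k)) +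
        ∑ k ∈ Finset.range n, a k * (n.choose k : ℚ) * 2 ^ (n - k)))
    (c : ℕ → ℕ → ℚ)
    (hc : ∀ j d, c j d = ∑ k ∈ Finset.Icc j d,
      ((d - j).choose (d - k) : ℚ) * a k / 2 ^ k) :
    ∀ d, 2 ≤ d → ∀ j, j ≤ d → c j d = (-1) ^ d * c (d - j) d := by
  set b : ℕ → ℚ := fun k => a k / 2 ^ k with hbdef
  have hcg : ∀ j d, j ≤ d → c j d = gg b (d - j) d := by
    intro j d hjd
    rw [hc j d]
    unfold gg
    refine Finset.sum_nbij' (fun k => d - k) (fun i => d - i) ?_ ?_ ?_ ?_ ?_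
    · intro k hk
      simp only [Finset.mem_Icc] at hk
      simp only [Finset.mem_range]
      omega
    · intro i hi
      simp only [Finset.mem_range] at hi
      simp only [Finset.mem_Icc]
      omega
    · intro k hk
      simp only [Finset.mem_Icc] at hk
      show d - (d - k) = k
      omega
    · intro i hi
      simp only [Finset.mem_range] at hi
      show d - (d - i) = i
      omega
    · intro k hk
      simp only [Finset.mem_Icc] at hk
      rw [show d - (d - k) = k by omega, hbdef]
      ring
  have hP := P_lemma a h0 h1 hrec
  have hQ := Q_lemma b hP
  intro d hd j hj
  rw [hcg j d hj, hcg (d - j) d (Nat.sub_le d j), show d - (d - j) = j by omega]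
  have h := hQ d (d - j) (Nat.sub_le d j)
  rwa [show d - (d - j) = j by omega] at h
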